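/- There exists a unique sequence (a_k)_{k≥1} of integers such that Π_{k=1}^∞ (1 − X^k)^{a_k} = 1 − 2X as formal power series over ℤ, and moreover each a_k is a positive integer, given explicitly by a_k = (1/k) Σ_{d | k} μ(k/d) 2^d, where μ is the Möbius function. -/

import Mathlib

open PowerSeries

/-- The truncated form of the identity `∏_{k≥1} (1 - X^k)^{a k} = 1 - 2X` in `ℤ[[X]]`,
where negative exponents are moved to the other side. Here `a k` plays the role of
`a_{k+1}`. -/
def ProdEq (a : ℕ → ℤ) : Prop :=
  ∀ n : ℕ, ∀ j ≤ n,
    PowerSeries.coeff j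
        (∏ k ∈ Finset.range n,
          ((1 : PowerSeries ℤ) - (PowerSeries.X : PowerSeries ℤ) ^ (k + 1)) ^ (a k).toNat)
      = PowerSeries.coeff j
        (((1 : PowerSeries ℤ) - 2 * PowerSeries.X) *
          ∏ k ∈ Finset.range n,
            ((1 : PowerSeries ℤ) - (PowerSeries.X : PowerSeries ℤ) ^ (k + 1)) ^ (-(a k)).toNat)

noncomputable section
open Finset

namespace S10

/-- `∑_{s ∣ n} X^n`, the inverse of `1 - X^s` for `s ≠ 0`. -/
def geom (s : ℕ) : PowerSeries ℤ := PowerSeries.mk fun n => if s ∣ n then 1 else 0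

lemma geom_mul (s : ℕ) (hs : s ≠ 0) : ((1 : PowerSeries ℤ) - X ^ s) * geom s = 1 := by
  ext n
  rw [sub_mul, one_mul, map_sub, coeff_X_pow_mul', coeff_one, geom, coeff_mk]
  by_cases h0 : n = 0
  · subst h0
    simp [Nat.pos_of_ne_zero hs, hs]
  · by_cases hle : s ≤ n
    · have hd : s ∣ n ↔ s ∣ n - s := by
        constructor
        · intro h; exact (Nat.dvd_sub h dvd_rfl)
        · intro h
          have : n = n - s + s := (Nat.sub_add_cancel hle).symm
          rw [this]; exact Nat.dvd_add h dvd_rfl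
      simp only [coeff_mk, if_pos hle, h0, if_false]
      by_cases hdd : s ∣ n
      · rw [if_pos hdd, if_pos (hd.mp hdd)]; ring
      · rw [if_neg hdd, if_neg (fun hh => hdd (hd.mpr hh))]; ring
    · have hnd : ¬ s ∣ n := fun hd => hle (Nat.le_of_dvd (Nat.pos_of_ne_zero h0) hd)
      simp [hle, hnd, h0]

/-- `∑ 2^n X^n`, the inverse of `1 - 2X`. -/
def geom2 : PowerSeries ℤ := PowerSeries.mk fun n => 2 ^ n

lemma geom2_mul : ((1 : PowerSeries ℤ) - 2 * X) * geom2 = 1 := by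
  ext n
  have h2 : (2 : PowerSeries ℤ) = C 2 := by simp
  rw [sub_mul, one_mul, map_sub, h2, mul_assoc, coeff_C_mul, coeff_one]
  cases n with
  | zero => simp [geom2]
  | succ m => simp [geom2, coeff_succ_X_mul, coeff_mk, pow_succ, mul_comm]

/-- the unit `1 - X^(m+1)` -/
def uX (m : ℕ) : (PowerSeries ℤ)ˣ :=
  ⟨1 - X ^ (m + 1), geom (m + 1), geom_mul (m + 1) m.succ_ne_zero,
    by rw [mul_comm]; exact geom_mul (m + 1) m.succ_ne_zero⟩

/-- the unit `1 - 2X` -/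
def u2 : (PowerSeries ℤ)ˣ :=
  ⟨1 - 2 * X, geom2, geom2_mul, by rw [mul_comm]; exact geom2_mul⟩

lemma uX_coe (m : ℕ) : ((uX m : (PowerSeries ℤ)ˣ) : PowerSeries ℤ) = 1 - X ^ (m + 1) := rfl

lemma u2_coe : ((u2 : (PowerSeries ℤ)ˣ) : PowerSeries ℤ) = 1 - 2 * X := rfl

/-- logarithmic derivative `X f'/f` of a unit -/
def logD (v : (PowerSeries ℤ)ˣ) : PowerSeries ℤ :=
  X * (d⁄dX ℤ (v : PowerSeries ℤ)) * ((v⁻¹ : (PowerSeries ℤ)ˣ) : PowerSeries ℤ)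

lemma logD_one : logD 1 = 0 := by
  simp [logD]

lemma logD_mul (v w : (PowerSeries ℤ)ˣ) : logD (v * w) = logD v + logD w := by
  have hv : (v : PowerSeries ℤ) * ((v⁻¹ : _ˣ) : PowerSeries ℤ) = 1 := v.mul_inv
  have hw : (w : PowerSeries ℤ) * ((w⁻¹ : _ˣ) : PowerSeries ℤ) = 1 := w.mul_inv
  show X * (d⁄dX ℤ ((v * w : _ˣ) : PowerSeries ℤ)) * (((v * w)⁻¹ : _ˣ) : PowerSeries ℤ) = _
  rw [mul_inv_rev]
  push_cast
  rw [Derivation.leibniz]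
  simp only [smul_eq_mul]
  unfold logD
  linear_combination (X * d⁄dX ℤ (w : PowerSeries ℤ) * ((w⁻¹ : _ˣ) : PowerSeries ℤ)) * hv +
    (X * d⁄dX ℤ (v : PowerSeries ℤ) * ((v⁻¹ : _ˣ) : PowerSeries ℤ)) * hw

lemma logD_pow (v : (PowerSeries ℤ)ˣ) (n : ℕ) : logD (v ^ n) = n • logD v := by
  induction n with
  | zero => simp [logD_one]
  | succ m ih => rw [pow_succ, logD_mul, ih, succ_nsmul]

lemma logD_prod {ι : Type*} (s : Finset ι) (v : ι → (PowerSeries ℤ)ˣ) :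
    logD (∏ i ∈ s, v i) = ∑ i ∈ s, logD (v i) := by
  classical
  induction s using Finset.cons_induction with
  | empty => simp [logD_one]
  | cons i s hi ih => rw [prod_cons, logD_mul, sum_cons, ih]

lemma dvd_X_mul_derivative {N : ℕ} {f : PowerSeries ℤ} (h : X ^ (N + 1) ∣ f) :
    X ^ (N + 1) ∣ X * (d⁄dX ℤ f) := by
  obtain ⟨t, rfl⟩ := h
  refine ⟨X * d⁄dX ℤ t + ((N + 1 : ℕ) : PowerSeries ℤ) * t, ?_⟩
  rw [Derivation.leibniz, Derivation.leibniz_pow, derivative_X]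
  simp only [smul_eq_mul, nsmul_eq_mul, Nat.add_sub_cancel, mul_one]
  ring

lemma logD_dvd_sub (v w : (PowerSeries ℤ)ˣ) (N : ℕ)
    (h : X ^ (N + 1) ∣ ((v : PowerSeries ℤ) - (w : PowerSeries ℤ))) :
    X ^ (N + 1) ∣ logD v - logD w := by
  have hv : (v : PowerSeries ℤ) * ((v⁻¹ : _ˣ) : PowerSeries ℤ) = 1 := v.mul_inv
  have hw : (w : PowerSeries ℤ) * ((w⁻¹ : _ˣ) : PowerSeries ℤ) = 1 := w.mul_inv
  have key : logD v - logD w =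
      (X * d⁄dX ℤ (v : PowerSeries ℤ) * (w : PowerSeries ℤ) -
          X * d⁄dX ℤ (w : PowerSeries ℤ) * (v : PowerSeries ℤ)) *
        (((v⁻¹ : _ˣ) : PowerSeries ℤ) * ((w⁻¹ : _ˣ) : PowerSeries ℤ)) := by
    unfold logD
    linear_combination (-(X * d⁄dX ℤ (v : PowerSeries ℤ) * ((v⁻¹ : _ˣ) : PowerSeries ℤ))) * hw +
      (X * d⁄dX ℤ (w : PowerSeries ℤ) * ((w⁻¹ : _ˣ) : PowerSeries ℤ)) * hv
  rw [key]
  refine Dvd.dvd.mul_right ?_ _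
  have h1 : X ^ (N + 1) ∣ X * d⁄dX ℤ ((v : PowerSeries ℤ) - w) := dvd_X_mul_derivative h
  have h2 : X * d⁄dX ℤ (v : PowerSeries ℤ) * (w : PowerSeries ℤ) -
        X * d⁄dX ℤ (w : PowerSeries ℤ) * (v : PowerSeries ℤ) =
      (X * d⁄dX ℤ (v : PowerSeries ℤ)) * ((w : PowerSeries ℤ) - (v : PowerSeries ℤ)) +
        (X * d⁄dX ℤ ((v : PowerSeries ℤ) - (w : PowerSeries ℤ))) * (v : PowerSeries ℤ) := by
    rw [map_sub]; ring
  rw [h2]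
  exact dvd_add (Dvd.dvd.mul_left (by simpa [neg_sub] using h.neg_right) _) (h1.mul_right _)

end S10

namespace S10
lemma uX_inv_coe (m : ℕ) : (((uX m)⁻¹ : _ˣ) : PowerSeries ℤ) = geom (m + 1) := rfl

lemma u2_inv_coe : ((u2⁻¹ : _ˣ) : PowerSeries ℤ) = geom2 := rfl

lemma logD_uX (m : ℕ) :
    logD (uX m) = C (-((m : ℤ) + 1)) * (X ^ (m + 1) * geom (m + 1)) := by
  unfold logD
  rw [uX_inv_coe]
  show X * (d⁄dX ℤ (1 - X ^ (m + 1))) * geom (m + 1) = _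
  rw [map_sub, Derivation.leibniz_pow, derivative_X, Derivation.map_one_eq_zero]
  simp only [smul_eq_mul, nsmul_eq_mul, Nat.add_sub_cancel, mul_one, zero_sub]
  rw [map_neg, map_add, map_one]
  push_cast
  rw [map_natCast (C (R := ℤ)) m]
  ring

lemma coeff_logD_uX (m N : ℕ) (hN : N ≠ 0) :
    coeff N (logD (uX m)) = if (m + 1) ∣ N then -((m : ℤ) + 1) else 0 := by
  rw [logD_uX, coeff_C_mul, coeff_X_pow_mul']
  by_cases hle : m + 1 ≤ N
  · have hd : m + 1 ∣ N ↔ m + 1 ∣ N - (m + 1) := by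
      constructor
      · intro h; exact Nat.dvd_sub h dvd_rfl
      · intro h
        have : N = N - (m + 1) + (m + 1) := (Nat.sub_add_cancel hle).symm
        rw [this]; exact Nat.dvd_add h dvd_rfl
    rw [if_pos hle]
    unfold geom
    rw [coeff_mk]
    by_cases hdd : (m + 1) ∣ N
    · rw [if_pos (hd.mp hdd), if_pos hdd]; ring
    · rw [if_neg (fun hh => hdd (hd.mpr hh)), if_neg hdd]; ring
  · have hnd : ¬ (m + 1) ∣ N := fun hd => hle (Nat.le_of_dvd (Nat.pos_of_ne_zero hN) hd)
    rw [if_neg hle, if_neg hnd, mul_zero]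

lemma logD_u2 : logD u2 = C (-2) * (X * geom2) := by
  unfold logD
  rw [u2_inv_coe]
  show X * (d⁄dX ℤ (1 - 2 * X)) * geom2 = _
  have h2 : (2 : PowerSeries ℤ) = C 2 := by simp
  rw [map_sub, h2, Derivation.leibniz, derivative_X, derivative_C, Derivation.map_one_eq_zero]
  simp only [smul_eq_mul, mul_one, mul_zero, add_zero, zero_sub, smul_zero]
  rw [show (-2 : ℤ) = -(2 : ℤ) from rfl, map_neg]
  ring

lemma coeff_logD_u2 (n : ℕ) : coeff (n + 1) (logD u2) = -2 ^ (n + 1) := by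
  rw [logD_u2, coeff_C_mul, coeff_succ_X_mul]
  unfold geom2
  rw [coeff_mk]
  ring

end S10

namespace S10

def Fp (a : ℕ → ℤ) (n : ℕ) : PowerSeries ℤ :=
  ∏ k ∈ Finset.range n, ((1 : PowerSeries ℤ) - (PowerSeries.X : PowerSeries ℤ) ^ (k + 1)) ^ (a k).toNat

def Gp (a : ℕ → ℤ) (n : ℕ) : PowerSeries ℤ :=
  ((1 : PowerSeries ℤ) - 2 * PowerSeries.X) *
    ∏ k ∈ Finset.range n, ((1 : PowerSeries ℤ) - (PowerSeries.X : PowerSeries ℤ) ^ (k + 1)) ^ (-(a k)).toNat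

def step (b : ℕ → ℤ) (n : ℕ) : ℤ := coeff (n + 1) (Fp b n) - coeff (n + 1) (Gp b n)

def A : ℕ → (ℕ → ℤ)
  | 0 => fun _ => 0
  | n + 1 => fun m => if m = n then step (A n) n else A n m

def aseq (n : ℕ) : ℤ := A (n + 1) n

lemma A_agree : ∀ n m, m < n → A n m = aseq m := by
  intro n
  induction n with
  | zero => intro m hm; omega
  | succ n ih =>
    intro m hm
    rcases Nat.lt_succ_iff_lt_or_eq.mp hm with h | rfl
    · show (if m = n then step (A n) n else A n m) = aseq m
      rw [if_neg (by omega), ih m h]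
    · rfl

lemma Fp_congr {b c : ℕ → ℤ} (n : ℕ) (h : ∀ k < n, b k = c k) : Fp b n = Fp c n :=
  Finset.prod_congr rfl fun k hk => by rw [h k (Finset.mem_range.mp hk)]

lemma Gp_congr {b c : ℕ → ℤ} (n : ℕ) (h : ∀ k < n, b k = c k) : Gp b n = Gp c n := by
  unfold Gp
  congr 1
  exact Finset.prod_congr rfl fun k hk => by rw [h k (Finset.mem_range.mp hk)]

lemma aseq_eq (n : ℕ) : aseq n = coeff (n + 1) (Fp aseq n) - coeff (n + 1) (Gp aseq n) := by
  have h1 : aseq n = step (A n) n := by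
    show A (n + 1) n = _
    show (if n = n then step (A n) n else A n n) = _
    rw [if_pos rfl]
  rw [h1, step, Fp_congr n (fun k hk => A_agree n k hk), Gp_congr n (fun k hk => A_agree n k hk)]

lemma constantCoeff_Fp (a : ℕ → ℤ) (n : ℕ) : constantCoeff (Fp a n) = 1 := by
  rw [Fp, map_prod]
  refine Finset.prod_eq_one fun k _ => ?_
  rw [map_pow, map_sub, map_one, map_pow, constantCoeff_X]
  simp

lemma constantCoeff_Gp (a : ℕ → ℤ) (n : ℕ) : constantCoeff (Gp a n) = 1 := by
  rw [Gp, map_mul, map_prod]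
  have h1 : constantCoeff ((1 : PowerSeries ℤ) - 2 * X) = 1 := by
    rw [map_sub, map_one, map_mul, constantCoeff_X]; simp
  rw [h1, one_mul]
  refine Finset.prod_eq_one fun k _ => ?_
  rw [map_pow, map_sub, map_one, map_pow, constantCoeff_X]
  simp

lemma eps_exists (s m : ℕ) : ∃ e : PowerSeries ℤ,
    ((1 : PowerSeries ℤ) - X ^ s) ^ m
      = 1 - (m : PowerSeries ℤ) * X ^ s + X ^ (2 * s) * e := by
  induction m with
  | zero => exact ⟨0, by simp⟩
  | succ m ih =>
    obtain ⟨e, he⟩ := ih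
    refine ⟨((1 : PowerSeries ℤ) - X ^ s) * e + (m : PowerSeries ℤ), ?_⟩
    rw [pow_succ, he]
    push_cast
    ring_nf

lemma claim : ∀ n : ℕ, (X : PowerSeries ℤ) ^ (n + 1) ∣ Fp aseq n - Gp aseq n := by
  intro n
  induction n with
  | zero =>
    refine ⟨2, ?_⟩
    rw [Fp, Gp]
    simp only [Finset.range_zero, Finset.prod_empty, mul_one, pow_one]
    ring
  | succ n ih =>
    obtain ⟨t, ht⟩ := ih
    obtain ⟨e, he⟩ := eps_exists (n + 1) (aseq n).toNat
    obtain ⟨f, hf⟩ := eps_exists (n + 1) (-(aseq n)).toNat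
    have hct : constantCoeff t = coeff (n + 1) (Fp aseq n) - coeff (n + 1) (Gp aseq n) := by
      have h2 := congrArg (coeff (n + 1)) ht
      rw [map_sub, coeff_X_pow_mul'] at h2
      rw [if_pos le_rfl, Nat.sub_self, coeff_zero_eq_constantCoeff] at h2
      exact h2.symm
    have hpq : ((((aseq n).toNat : ℤ)) - (((-(aseq n)).toNat : ℤ))) = aseq n := by omega
    have hX : (X : PowerSeries ℤ) ∣
        (t - (((aseq n).toNat : PowerSeries ℤ) * Fp aseq n
          - (((-(aseq n)).toNat : PowerSeries ℤ)) * Gp aseq n)) := by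
      rw [X_dvd_iff, map_sub, map_sub, map_mul, map_mul, constantCoeff_Fp, constantCoeff_Gp,
        mul_one, mul_one, hct]
      have hc : ∀ m : ℕ, constantCoeff ((m : PowerSeries ℤ)) = (m : ℤ) := fun m => by
        simp
      rw [hc, hc]
      have := aseq_eq n
      omega
    obtain ⟨r, hr⟩ := hX
    refine ⟨r + X ^ n * (Fp aseq n * e - Gp aseq n * f), ?_⟩
    have hFs : Fp aseq (n + 1)
        = Fp aseq n * ((1 : PowerSeries ℤ) - X ^ (n + 1)) ^ ((aseq n).toNat) :=
      Finset.prod_range_succ _ _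
    have hGs : Gp aseq (n + 1)
        = Gp aseq n * ((1 : PowerSeries ℤ) - X ^ (n + 1)) ^ ((-(aseq n)).toNat) := by
      unfold Gp
      rw [Finset.prod_range_succ]
      ring
    rw [hFs, hGs, he, hf]
    linear_combination ht + X ^ (n + 1) * hr

theorem prodEq_aseq : ProdEq aseq := by
  intro n j hj
  have h := claim n
  have h2 := X_pow_dvd_iff.mp h j (by omega)
  rw [map_sub, sub_eq_zero] at h2
  exact h2

end S10

namespace S10

lemma divisor_sum {a : ℕ → ℤ} (h : ProdEq a) (N : ℕ) (hN : N ≠ 0) :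
    ∑ d ∈ N.divisors, (d : ℤ) * a (d - 1) = 2 ^ N := by
  classical
  set UF : (PowerSeries ℤ)ˣ := ∏ k ∈ range N, (uX k) ^ (a k).toNat with hUF
  set UG : (PowerSeries ℤ)ˣ := u2 * ∏ k ∈ range N, (uX k) ^ (-(a k)).toNat with hUG
  have hFc : (UF : PowerSeries ℤ)
      = ∏ k ∈ range N, ((1 : PowerSeries ℤ) - X ^ (k + 1)) ^ (a k).toNat := by
    rw [hUF]
    calc ((∏ k ∈ range N, uX k ^ (a k).toNat : (PowerSeries ℤ)ˣ) : PowerSeries ℤ)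
        = ∏ k ∈ range N, ((uX k ^ (a k).toNat : (PowerSeries ℤ)ˣ) : PowerSeries ℤ) :=
          map_prod (Units.coeHom (PowerSeries ℤ)) _ (range N)
      _ = _ := prod_congr rfl fun k _ => by
          rw [Units.val_pow_eq_pow_val, uX_coe]
  have hGc : (UG : PowerSeries ℤ)
      = ((1 : PowerSeries ℤ) - 2 * X) *
          ∏ k ∈ range N, ((1 : PowerSeries ℤ) - X ^ (k + 1)) ^ (-(a k)).toNat := by
    rw [hUG, Units.val_mul, u2_coe]
    refine congrArg _ ?_
    calc ((∏ k ∈ range N, uX k ^ (-(a k)).toNat : (PowerSeries ℤ)ˣ) : PowerSeries ℤ)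
        = ∏ k ∈ range N, ((uX k ^ (-(a k)).toNat : (PowerSeries ℤ)ˣ) : PowerSeries ℤ) :=
          map_prod (Units.coeHom (PowerSeries ℤ)) _ (range N)
      _ = _ := prod_congr rfl fun k _ => by
          rw [Units.val_pow_eq_pow_val, uX_coe]
  have hdvd : X ^ (N + 1) ∣ ((UF : PowerSeries ℤ) - (UG : PowerSeries ℤ)) := by
    rw [X_pow_dvd_iff]
    intro m hm
    rw [map_sub, hFc, hGc, h N m (Nat.lt_succ_iff.mp hm), sub_self]
  have hco : coeff N (logD UF) = coeff N (logD UG) := by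
    have := X_pow_dvd_iff.mp (logD_dvd_sub UF UG N hdvd) N (Nat.lt_succ_self N)
    rw [map_sub, sub_eq_zero] at this
    exact this
  have eF : coeff N (logD UF)
      = ∑ k ∈ range N, ((a k).toNat : ℤ) * (if (k + 1) ∣ N then -((k : ℤ) + 1) else 0) := by
    rw [hUF, logD_prod, map_sum]
    refine sum_congr rfl fun k _ => ?_
    rw [logD_pow, map_nsmul, coeff_logD_uX k N hN, nsmul_eq_mul]
  obtain ⟨M, rfl⟩ := Nat.exists_eq_succ_of_ne_zero hN
  have eG : coeff (M + 1) (logD UG)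
      = -2 ^ (M + 1) +
        ∑ k ∈ range (M + 1), ((-(a k)).toNat : ℤ) *
          (if (k + 1) ∣ (M + 1) then -((k : ℤ) + 1) else 0) := by
    rw [hUG, logD_mul, map_add, logD_prod, map_sum, coeff_logD_u2]
    congr 1
    refine sum_congr rfl fun k _ => ?_
    rw [logD_pow, map_nsmul, coeff_logD_uX k (M + 1) hN, nsmul_eq_mul]
  have hkey : ∑ k ∈ range (M + 1),
      (if (k + 1) ∣ (M + 1) then ((k : ℤ) + 1) * a k else 0) = 2 ^ (M + 1) := by
    have h1 : ∑ k ∈ range (M + 1),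
        (((a k).toNat : ℤ) * (if (k + 1) ∣ (M + 1) then -((k : ℤ) + 1) else 0)
          - ((-(a k)).toNat : ℤ) * (if (k + 1) ∣ (M + 1) then -((k : ℤ) + 1) else 0))
        = -2 ^ (M + 1) := by
      rw [sum_sub_distrib, ← eF, hco, eG]; ring
    have h2 : ∀ k ∈ range (M + 1),
        (((a k).toNat : ℤ) * (if (k + 1) ∣ (M + 1) then -((k : ℤ) + 1) else 0)
          - ((-(a k)).toNat : ℤ) * (if (k + 1) ∣ (M + 1) then -((k : ℤ) + 1) else 0))
        = -(if (k + 1) ∣ (M + 1) then ((k : ℤ) + 1) * a k else 0) := by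
      intro k _
      have ht : ((a k).toNat : ℤ) - ((-(a k)).toNat : ℤ) = a k := by omega
      split_ifs with hd
      · linear_combination (-(k : ℤ) - 1) * ht
      · ring
    rw [sum_congr rfl h2, Finset.sum_neg_distrib] at h1
    linarith
  rw [← Nat.filter_dvd_eq_divisors hN, sum_filter, Finset.sum_range_succ']
  have h0 : ¬ (0 ∣ (M + 1)) := by simp
  rw [if_neg h0, add_zero, ← hkey]
  refine sum_congr rfl fun k _ => ?_
  split_ifs with hd
  · push_cast; simp
  · rfl

theorem moebius_formula {a : ℕ → ℤ} (h : ProdEq a) (k : ℕ) :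
    ((k : ℤ) + 1) * a k
      = ∑ d ∈ Nat.divisors (k + 1), ArithmeticFunction.moebius ((k + 1) / d) * 2 ^ d := by
  have key : ∀ n : ℕ, n > 0 → ∑ d ∈ n.divisors, ((d : ℤ) * a (d - 1)) = (2 : ℤ) ^ n :=
    fun n hn => divisor_sum h n hn.ne'
  have hinv := (ArithmeticFunction.sum_eq_iff_sum_mul_moebius_eq
      (f := fun d => (d : ℤ) * a (d - 1)) (g := fun n => (2 : ℤ) ^ n)).mp key (k + 1)
      k.succ_pos
  push_cast at hinv
  rw [Nat.sum_divisorsAntidiagonal' (f := fun i j => ArithmeticFunction.moebius i * 2 ^ j)]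
    at hinv
  rw [hinv]

end S10

namespace S10

lemma sum_range_two_pow (n : ℕ) : ∑ d ∈ range n, (2 : ℤ) ^ d = 2 ^ n - 1 := by
  induction n with
  | zero => simp
  | succ m ih => rw [sum_range_succ, ih]; ring

lemma a_pos {a : ℕ → ℤ} (h : ProdEq a) (k : ℕ) : 0 < a k := by
  have hf := moebius_formula h k
  have hsplit : ∑ d ∈ (k + 1).divisors, (ArithmeticFunction.moebius ((k + 1) / d) : ℤ) * 2 ^ d
      = (ArithmeticFunction.moebius ((k + 1) / (k + 1)) : ℤ) * 2 ^ (k + 1)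
        + ∑ d ∈ (k + 1).properDivisors, (ArithmeticFunction.moebius ((k + 1) / d) : ℤ) * 2 ^ d := by
    rw [← Nat.cons_self_properDivisors k.succ_ne_zero, Finset.sum_cons]
  have hnn : (k + 1) / (k + 1) = 1 := Nat.div_self k.succ_pos
  have hbound : ∀ d ∈ (k + 1).properDivisors,
      -(2 : ℤ) ^ d ≤ (ArithmeticFunction.moebius ((k + 1) / d) : ℤ) * 2 ^ d := by
    intro d _
    have h1 : -1 ≤ (ArithmeticFunction.moebius ((k + 1) / d) : ℤ) :=
      neg_le_of_abs_le ArithmeticFunction.abs_moebius_le_one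
    have h2 : (0 : ℤ) < 2 ^ d := by positivity
    nlinarith
  have hsub : (k + 1).properDivisors ⊆ Finset.Ico 1 (k + 1) := by
    intro d hd
    rw [Nat.mem_properDivisors] at hd
    rw [Finset.mem_Ico]
    exact ⟨Nat.pos_of_dvd_of_pos hd.1 k.succ_pos, hd.2⟩
  have hsum2 : ∑ d ∈ (k + 1).properDivisors, (2 : ℤ) ^ d
      ≤ ∑ d ∈ Finset.Ico 1 (k + 1), (2 : ℤ) ^ d :=
    Finset.sum_le_sum_of_subset_of_nonneg hsub (fun i _ _ => by positivity)
  have hIco : ∑ d ∈ Finset.Ico 1 (k + 1), (2 : ℤ) ^ d = 2 ^ (k + 1) - 2 := by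
    rw [Finset.sum_Ico_eq_sum_range]
    simp only [Nat.add_sub_cancel]
    have : ∀ i, (2 : ℤ) ^ (1 + i) = 2 * 2 ^ i := fun i => by rw [pow_add]; ring
    rw [Finset.sum_congr rfl (fun i _ => this i), ← Finset.mul_sum, sum_range_two_pow]
    ring
  have hA : ∑ d ∈ (k + 1).properDivisors, -(2 : ℤ) ^ d
      ≤ ∑ d ∈ (k + 1).properDivisors, (ArithmeticFunction.moebius ((k + 1) / d) : ℤ) * 2 ^ d :=
    Finset.sum_le_sum hbound
  rw [Finset.sum_neg_distrib] at hA
  have hpos : 0 < ((k : ℤ) + 1) * a k := by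
    rw [hf, hsplit, hnn, ArithmeticFunction.moebius_apply_one]
    have : (0 : ℤ) < 2 ^ (k + 1) := by positivity
    linarith
  by_contra hle
  push_neg at hle
  have : ((k : ℤ) + 1) * a k ≤ 0 := by
    have hk : (0 : ℤ) ≤ (k : ℤ) + 1 := by positivity
    exact mul_nonpos_of_nonneg_of_nonpos hk hle
  linarith

end S10
end

theorem stmt10 :
    (∃! a : ℕ → ℤ, ProdEq a) ∧
    ∀ a : ℕ → ℤ, ProdEq a → ∀ k : ℕ,
      0 < a k ∧
      ((k : ℤ) + 1) * a k
        = ∑ d ∈ Nat.divisors (k + 1), ArithmeticFunction.moebius ((k + 1) / d) * 2 ^ d := by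
  constructor
  · refine ⟨S10.aseq, S10.prodEq_aseq, fun b hb => funext fun k => ?_⟩
    have h1 := S10.moebius_formula hb k
    have h2 := S10.moebius_formula S10.prodEq_aseq k
    have hne : ((k : ℤ) + 1) ≠ 0 := by positivity
    exact mul_left_cancel₀ hne (h1.trans h2.symm)
  · intro a ha k
    exact ⟨S10.a_pos ha k, S10.moebius_formula ha k⟩
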